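/- For x ∈ ℝ, let X_N(x) = ∏_{i=1}^N |x − λ_i|^β under the beta ensemble with parameters (β,N). Then for every κ > 0 and every compact set K ⊂ ℝ, sup{ E_{β,N}[(X_N(x))²] : βN ≤ κ, x ∈ K } < ∞. -/

import Mathlib

open MeasureTheory Real Filter Finset

noncomputable section

/-- The unnormalized density of the beta ensemble with potential `V`,
inverse temperature `β` and `N` particles. -/
def betaWeight (V : ℝ → ℝ) (β : ℝ) (N : ℕ) (lam : Fin N → ℝ) : ℝ :=
  (∏ i : Fin N, ∏ j ∈ Finset.Ioi i, |lam j - lam i| ^ β) * Real.exp (- ∑ i, V (lam i))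

/-- The partition function `Z_{β,N}`. -/
def Zpart (V : ℝ → ℝ) (β : ℝ) (N : ℕ) : ℝ :=
  ∫ lam : Fin N → ℝ, betaWeight V β N lam

/-- The beta ensemble: the probability measure on `ℝ^N` with density proportional to
`∏_{i<j} |λ_j - λ_i|^β · exp(-∑ V(λ_i))`. -/
def betaMeasure (V : ℝ → ℝ) (β : ℝ) (N : ℕ) : Measure (Fin N → ℝ) :=
  (ENNReal.ofReal (Zpart V β N))⁻¹ •
    volume.withDensity (fun lam => ENNReal.ofReal (betaWeight V β N lam))

namespace BetaAux

open scoped ENNReal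

/-! ### Basic objects -/

def gE (t : ℝ) : ℝ≥0∞ := ENNReal.ofReal (1 + t^2)

def eV (V : ℝ → ℝ) (t : ℝ) : ℝ≥0∞ := ENNReal.ofReal (Real.exp (-V t))

def pairF (β a b : ℝ) : ℝ≥0∞ := (ENNReal.ofReal |b - a|) ^ β

def PP (β : ℝ) {m : ℕ} (z : Fin m → ℝ) : ℝ≥0∞ :=
  ∏ i, ∏ j ∈ Finset.Ioi i, pairF β (z i) (z j)

def Wfun (V : ℝ → ℝ) (β : ℝ) {N : ℕ} (lam : Fin N → ℝ) : ℝ≥0∞ :=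
  PP β lam * ∏ i, eV V (lam i)

lemma one_le_gE (t : ℝ) : 1 ≤ gE t := by
  rw [gE, show (1:ℝ≥0∞) = ENNReal.ofReal 1 by simp]
  exact ENNReal.ofReal_le_ofReal (by nlinarith [sq_nonneg t])

lemma gE_ne_top (t : ℝ) : gE t ≠ ∞ := ENNReal.ofReal_ne_top

lemma gE_ne_zero (t : ℝ) : gE t ≠ 0 := by
  intro h
  simpa [h] using one_le_gE t

lemma measurable_gE : Measurable gE :=
  (measurable_const.add ((measurable_id (α := ℝ)).pow_const 2)).ennreal_ofReal

lemma measurable_eV {V : ℝ → ℝ} (hV : Measurable V) : Measurable (eV V) :=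
  (hV.neg.exp).ennreal_ofReal

lemma eV_ne_zero (V : ℝ → ℝ) (t : ℝ) : eV V t ≠ 0 := by
  simp only [eV, ne_eq, ENNReal.ofReal_eq_zero, not_le]
  exact Real.exp_pos _

lemma pairF_symm (β a b : ℝ) : pairF β a b = pairF β b a := by
  unfold pairF; rw [abs_sub_comm]

lemma pairF_half {β : ℝ} (hβ : 0 ≤ β) (a b : ℝ) :
    pairF (β/2) a b * pairF (β/2) b a = pairF β a b := by
  rw [pairF_symm (β/2) b a, pairF, pairF,
    ← ENNReal.rpow_add_of_nonneg _ _ (by linarith) (by linarith), add_halves]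

lemma pairF_ne_top {β : ℝ} (hβ : 0 ≤ β) (a b : ℝ) : pairF β a b ≠ ∞ :=
  ENNReal.rpow_ne_top_of_nonneg hβ ENNReal.ofReal_ne_top

lemma Wfun_ne_top {V : ℝ → ℝ} {β : ℝ} (hβ : 0 ≤ β) {N : ℕ} (lam : Fin N → ℝ) :
    Wfun V β lam ≠ ∞ := by
  unfold Wfun PP
  refine ENNReal.mul_ne_top ?_ ?_
  · refine (ENNReal.prod_lt_top fun i _ => ?_).ne
    exact (ENNReal.prod_lt_top fun j _ => (pairF_ne_top hβ _ _).lt_top)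
  · exact (ENNReal.prod_lt_top fun i _ => ENNReal.ofReal_lt_top).ne

lemma measurable_Wfun {V : ℝ → ℝ} (hV : Measurable V) (β : ℝ) {N : ℕ} :
    Measurable (fun lam : Fin N → ℝ => Wfun V β lam) := by
  unfold Wfun PP pairF
  apply Measurable.mul
  · exact Finset.measurable_prod _ fun i _ => Finset.measurable_prod _ fun j _ =>
      (((measurable_pi_apply j).sub (measurable_pi_apply i)).abs.ennreal_ofReal).pow_const β
  · exact Finset.measurable_prod _ fun i _ =>
      (measurable_eV hV).comp (measurable_pi_apply i)

lemma measurable_betaWeight {V : ℝ → ℝ} (hV : Measurable V) (β : ℝ) {N : ℕ} :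
    Measurable (fun lam : Fin N → ℝ => betaWeight V β N lam) := by
  unfold betaWeight
  apply Measurable.mul
  · exact Finset.measurable_prod _ fun i _ => Finset.measurable_prod _ fun j _ =>
      (((measurable_pi_apply j).sub (measurable_pi_apply i)).abs).pow_const β
  · exact ((Finset.measurable_sum _ fun i _ => hV.comp (measurable_pi_apply i)).neg).exp

lemma betaWeight_nonneg (V : ℝ → ℝ) (β : ℝ) (N : ℕ) (lam : Fin N → ℝ) :
    0 ≤ betaWeight V β N lam := by
  unfold betaWeight
  refine mul_nonneg ?_ (Real.exp_pos _).le
  exact Finset.prod_nonneg fun i _ => Finset.prod_nonneg fun j _ =>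
    Real.rpow_nonneg (abs_nonneg _) _

lemma ofReal_betaWeight (V : ℝ → ℝ) {β : ℝ} (hβ : 0 ≤ β) (N : ℕ) (lam : Fin N → ℝ) :
    ENNReal.ofReal (betaWeight V β N lam) = Wfun V β lam := by
  unfold betaWeight Wfun PP pairF eV
  rw [ENNReal.ofReal_mul (Finset.prod_nonneg fun i _ => Finset.prod_nonneg fun j _ =>
    Real.rpow_nonneg (abs_nonneg _) _)]
  congr 1
  · rw [ENNReal.ofReal_prod_of_nonneg fun i _ => Finset.prod_nonneg fun j _ =>
      Real.rpow_nonneg (abs_nonneg _) _]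
    refine Finset.prod_congr rfl fun i _ => ?_
    rw [ENNReal.ofReal_prod_of_nonneg fun j _ => Real.rpow_nonneg (abs_nonneg _) _]
    exact Finset.prod_congr rfl fun j _ =>
      (ENNReal.ofReal_rpow_of_nonneg (abs_nonneg _) hβ).symm
  · rw [show (- ∑ i, V (lam i)) = ∑ i, -V (lam i) by rw [← Finset.sum_neg_distrib],
      Real.exp_sum, ENNReal.ofReal_prod_of_nonneg fun i _ => (Real.exp_pos _).le]

/-! ### Combinatorial lemmas: splitting the pair product -/

section Comb

variable {β : ℝ}

lemma prod_lt_pairs {M : Type*} [CommMonoid M] {m : ℕ} (F : Fin m → Fin m → M) :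
    ∏ i, ∏ j ∈ Finset.Ioi i, F i j
      = ∏ p ∈ (Finset.univ : Finset (Fin m)).offDiag.filter (fun p => p.1 < p.2), F p.1 p.2 := by
  rw [Finset.prod_sigma' Finset.univ (fun i => Finset.Ioi i) (fun i j => F i j)]
  refine Finset.prod_nbij' (fun q => (q.1, q.2)) (fun p => ⟨p.1, p.2⟩) ?_ ?_ ?_ ?_ ?_
  · intro q hq
    simp only [Finset.mem_sigma, Finset.mem_univ, Finset.mem_Ioi, true_and] at hq
    simp only [Finset.mem_filter, Finset.mem_offDiag, Finset.mem_univ, true_and]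
    exact ⟨hq.ne, hq⟩
  · intro p hp
    simp only [Finset.mem_filter, Finset.mem_offDiag, Finset.mem_univ, true_and] at hp
    simp only [Finset.mem_sigma, Finset.mem_univ, Finset.mem_Ioi, true_and]
    exact hp.2
  · intro q _; rfl
  · intro p _; rfl
  · intro q _; rfl

lemma PP_offDiag {m : ℕ} (hβ : 0 ≤ β) (z : Fin m → ℝ) :
    PP β z = ∏ p ∈ (Finset.univ : Finset (Fin m)).offDiag, pairF (β/2) (z p.1) (z p.2) := by
  classical
  have hsplit := Finset.filter_union_filter_not_eq (fun p : Fin m × Fin m => p.1 < p.2)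
    (Finset.univ : Finset (Fin m)).offDiag
  rw [← hsplit, Finset.prod_union (Finset.disjoint_filter_filter_not _ _ _)]
  have h2 : ∏ p ∈ (Finset.univ : Finset (Fin m)).offDiag.filter (fun p => ¬ p.1 < p.2),
      pairF (β/2) (z p.1) (z p.2)
      = ∏ p ∈ (Finset.univ : Finset (Fin m)).offDiag.filter (fun p => p.1 < p.2),
        pairF (β/2) (z p.2) (z p.1) := by
    refine Finset.prod_nbij' (fun p => (p.2, p.1)) (fun p => (p.2, p.1)) ?_ ?_ ?_ ?_ ?_
    · intro p hp
      simp only [Finset.mem_filter, Finset.mem_offDiag, Finset.mem_univ, true_and, not_lt] at hp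
      obtain ⟨hne, hle⟩ := hp
      have hlt : p.2 < p.1 := lt_of_le_of_ne hle (fun h => hne h.symm)
      simp only [Finset.mem_filter, Finset.mem_offDiag, Finset.mem_univ, true_and]
      exact ⟨hlt.ne, hlt⟩
    · intro p hp
      simp only [Finset.mem_filter, Finset.mem_offDiag, Finset.mem_univ, true_and] at hp
      obtain ⟨hne, hlt⟩ := hp
      simp only [Finset.mem_filter, Finset.mem_offDiag, Finset.mem_univ, true_and, not_lt]
      exact ⟨hlt.ne', hlt.le⟩
    · intro p _; rfl
    · intro p _; rfl
    · intro p _; rfl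
  rw [h2, ← Finset.prod_mul_distrib]
  rw [PP, prod_lt_pairs (fun i j => pairF β (z i) (z j))]
  exact (Finset.prod_congr rfl fun p _ => (pairF_half hβ _ _)).symm

lemma prod_erase_succAbove {M : Type*} [CommMonoid M] {n : ℕ} (k : Fin (n+1))
    (h : Fin (n+1) → M) :
    ∏ j ∈ Finset.univ.erase k, h j = ∏ i : Fin n, h (k.succAbove i) := by
  refine (Finset.prod_nbij (fun i => k.succAbove i) ?_ ?_ ?_ ?_).symm
  · intro i _
    simp [Finset.mem_erase, Fin.succAbove_ne k i]
  · intro a _ b _ hab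
    exact Fin.succAbove_right_injective hab
  · intro j hj
    rw [Finset.mem_coe, Finset.mem_erase] at hj
    obtain ⟨i, hi⟩ := Fin.exists_succAbove_eq hj.1
    exact ⟨i, by simp, hi⟩
  · intro i _; rfl

lemma prod_offDiag_erase_succAbove {M : Type*} [CommMonoid M] {n : ℕ} (k : Fin (n+1))
    (F : Fin (n+1) → Fin (n+1) → M) :
    ∏ p ∈ (Finset.univ.erase k).offDiag, F p.1 p.2
      = ∏ q ∈ (Finset.univ : Finset (Fin n)).offDiag, F (k.succAbove q.1) (k.succAbove q.2) := by
  refine (Finset.prod_nbij (fun q => (k.succAbove q.1, k.succAbove q.2)) ?_ ?_ ?_ ?_).symm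
  · intro q hq
    rw [Finset.mem_offDiag] at hq
    rw [Finset.mem_offDiag]
    refine ⟨Finset.mem_erase.2 ⟨Fin.succAbove_ne k _, Finset.mem_univ _⟩,
      Finset.mem_erase.2 ⟨Fin.succAbove_ne k _, Finset.mem_univ _⟩, ?_⟩
    exact fun h => hq.2.2 (Fin.succAbove_right_injective h)
  · intro a _ b _ hab
    have h1 := congrArg Prod.fst hab
    have h2 := congrArg Prod.snd hab
    simp only at h1 h2
    exact Prod.ext (Fin.succAbove_right_injective h1) (Fin.succAbove_right_injective h2)
  · intro p hp
    rw [Finset.mem_coe, Finset.mem_offDiag] at hp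
    obtain ⟨h1, h2, hne⟩ := hp
    rw [Finset.mem_erase] at h1 h2
    obtain ⟨i, hi⟩ := Fin.exists_succAbove_eq h1.1
    obtain ⟨j, hj⟩ := Fin.exists_succAbove_eq h2.1
    refine ⟨(i, j), ?_, by simp [hi, hj]⟩
    rw [Finset.mem_coe, Finset.mem_offDiag]
    refine ⟨Finset.mem_univ _, Finset.mem_univ _, ?_⟩
    intro hij
    have hij' : i = j := hij
    exact hne (by rw [← hi, ← hj, hij'])
  · intro q _; rfl

lemma PP_insertNth (hβ : 0 ≤ β) {n : ℕ} (k : Fin (n+1)) (t : ℝ) (y : Fin n → ℝ) :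
    PP β (k.insertNth t y : Fin (n+1) → ℝ) = (∏ j, pairF β (y j) t) * PP β y := by
  classical
  set lam : Fin (n+1) → ℝ := k.insertNth t y with hlam
  have hins : (Finset.univ : Finset (Fin (n+1))) = insert k (Finset.univ.erase k) :=
    (Finset.insert_erase (Finset.mem_univ k)).symm
  have hk : k ∉ Finset.univ.erase k := Finset.notMem_erase k _
  have hoff : (Finset.univ : Finset (Fin (n+1))).offDiag
      = ((Finset.univ.erase k).offDiag ∪ ({k} : Finset (Fin (n+1))) ×ˢ (Finset.univ.erase k))
        ∪ (Finset.univ.erase k) ×ˢ ({k} : Finset (Fin (n+1))) := by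
    conv_lhs => rw [hins]
    rw [Finset.offDiag_insert hk]
  rw [PP_offDiag hβ, PP_offDiag hβ, hoff]
  have hd1 : Disjoint ((Finset.univ.erase k).offDiag)
      (({k} : Finset (Fin (n+1))) ×ˢ (Finset.univ.erase k)) := by
    rw [Finset.disjoint_left]
    intro p hp hp'
    rw [Finset.mem_offDiag] at hp
    rw [Finset.mem_product, Finset.mem_singleton] at hp'
    exact (Finset.mem_erase.1 hp.1).1 hp'.1
  have hd2 : Disjoint ((Finset.univ.erase k).offDiag ∪
      ({k} : Finset (Fin (n+1))) ×ˢ (Finset.univ.erase k))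
      ((Finset.univ.erase k) ×ˢ ({k} : Finset (Fin (n+1)))) := by
    rw [Finset.disjoint_left]
    intro p hp hp'
    rw [Finset.mem_product, Finset.mem_singleton] at hp'
    rw [Finset.mem_union] at hp
    rcases hp with h | h
    · rw [Finset.mem_offDiag] at h
      exact (Finset.mem_erase.1 h.2.1).1 hp'.2
    · rw [Finset.mem_product, Finset.mem_singleton] at h
      exact (Finset.mem_erase.1 hp'.1).1 h.1
  rw [Finset.prod_union hd2, Finset.prod_union hd1]
  -- the three pieces
  have e1 : ∏ p ∈ ((Finset.univ.erase k).offDiag), pairF (β/2) (lam p.1) (lam p.2)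
      = ∏ q ∈ (Finset.univ : Finset (Fin n)).offDiag, pairF (β/2) (y q.1) (y q.2) := by
    rw [prod_offDiag_erase_succAbove k (fun a b => pairF (β/2) (lam a) (lam b))]
    refine Finset.prod_congr rfl fun q _ => ?_
    rw [hlam]
    rw [Fin.insertNth_apply_succAbove, Fin.insertNth_apply_succAbove]
  have e2 : ∏ p ∈ (({k} : Finset (Fin (n+1))) ×ˢ (Finset.univ.erase k)),
      pairF (β/2) (lam p.1) (lam p.2) = ∏ i : Fin n, pairF (β/2) t (y i) := by
    rw [Finset.prod_product' (f := fun a b => pairF (β/2) (lam a) (lam b))]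
    rw [Finset.prod_singleton]
    rw [prod_erase_succAbove k (fun j => pairF (β/2) (lam k) (lam j))]
    refine Finset.prod_congr rfl fun i _ => ?_
    rw [hlam, Fin.insertNth_apply_same, Fin.insertNth_apply_succAbove]
  have e3 : ∏ p ∈ ((Finset.univ.erase k) ×ˢ ({k} : Finset (Fin (n+1)))),
      pairF (β/2) (lam p.1) (lam p.2) = ∏ i : Fin n, pairF (β/2) (y i) t := by
    rw [Finset.prod_product' (f := fun a b => pairF (β/2) (lam a) (lam b))]
    rw [prod_erase_succAbove k (fun j => ∏ b ∈ {k}, pairF (β/2) (lam j) (lam b))]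
    refine Finset.prod_congr rfl fun i _ => ?_
    rw [Finset.prod_singleton, hlam, Fin.insertNth_apply_same, Fin.insertNth_apply_succAbove]
  rw [e1, e2, e3]
  have hBC : (∏ i : Fin n, pairF (β/2) t (y i)) * (∏ i : Fin n, pairF (β/2) (y i) t)
      = ∏ j, pairF β (y j) t := by
    rw [← Finset.prod_mul_distrib]
    exact Finset.prod_congr rfl fun i _ => by rw [mul_comm, pairF_half hβ]
  rw [mul_assoc, hBC, mul_comm]

lemma Wfun_insertNth (V : ℝ → ℝ) {β : ℝ} (hβ : 0 ≤ β) {n : ℕ} (k : Fin (n+1)) (t : ℝ)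
    (y : Fin n → ℝ) :
    Wfun V β (k.insertNth t y : Fin (n+1) → ℝ)
      = ((∏ j, pairF β (y j) t) * eV V t) * Wfun V β y := by
  unfold Wfun
  rw [PP_insertNth hβ k t y,
    Fin.prod_univ_succAbove (fun i => eV V ((k.insertNth t y : Fin (n+1) → ℝ) i)) k]
  simp only [Fin.insertNth_apply_same, Fin.insertNth_apply_succAbove]
  ring

end Comb

/-! ### Product lintegral over pi measure -/

lemma lintegral_pi_prod : ∀ {m : ℕ} (h : Fin m → ℝ → ℝ≥0∞), (∀ i, Measurable (h i)) →
    ∫⁻ z : Fin m → ℝ, ∏ i, h i (z i) = ∏ i, ∫⁻ t, h i t := by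
  intro m
  induction m with
  | zero =>
    intro h _
    simp only [Finset.univ_eq_empty, Finset.prod_empty]
    rw [lintegral_one, volume_pi, Measure.pi_univ]
    simp
  | succ n ih =>
    intro h hmeas
    have mp := (measurePreserving_piFinSuccAbove (fun _ : Fin (n+1) => (volume : Measure ℝ)) 0).symm
    have hF : Measurable fun z : Fin (n+1) → ℝ => ∏ i, h i (z i) :=
      Finset.measurable_prod _ fun i _ => (hmeas i).comp (measurable_pi_apply i)
    rw [volume_pi, ← mp.lintegral_comp hF]
    have heval : ∀ p : ℝ × (Fin n → ℝ),
        (∏ i, h i (((MeasurableEquiv.piFinSuccAbove (fun _ => ℝ) 0).symm p) i))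
          = h 0 p.1 * ∏ j : Fin n, h j.succ (p.2 j) := by
      intro p
      rw [MeasurableEquiv.piFinSuccAbove_symm_apply]
      simp only [Fin.insertNthEquiv, Equiv.coe_fn_mk, Fin.insertNth_zero]
      rw [Fin.prod_univ_succ]
      simp [Fin.zero_succAbove]
    simp_rw [heval]
    have hQmeas : Measurable fun w : Fin n → ℝ => ∏ j : Fin n, h j.succ (w j) :=
      Finset.measurable_prod Finset.univ fun j _ => (hmeas j.succ).comp (measurable_pi_apply j)
    have hGmeas : Measurable fun a : ℝ × (Fin n → ℝ) => h 0 a.1 * ∏ j : Fin n, h j.succ (a.2 j) :=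
      ((hmeas 0).comp measurable_fst).mul (hQmeas.comp measurable_snd)
    rw [MeasureTheory.lintegral_prod _ hGmeas.aemeasurable]
    have hinner : ∀ t : ℝ, ∫⁻ w : Fin n → ℝ, h 0 t * ∏ j : Fin n, h j.succ (w j)
        ∂(Measure.pi fun _ => volume)
        = h 0 t * ∫⁻ w : Fin n → ℝ, ∏ j : Fin n, h j.succ (w j) ∂(Measure.pi fun _ => volume) := by
      intro t
      rw [lintegral_const_mul _ hQmeas]
    simp_rw [hinner]
    rw [lintegral_mul_const _ (hmeas 0)]
    have hQ : ∫⁻ w : Fin n → ℝ, ∏ j : Fin n, h j.succ (w j) ∂(Measure.pi fun _ => volume)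
        = ∏ j : Fin n, ∫⁻ t, h j.succ t := by
      rw [← volume_pi]
      exact ih (fun j => h j.succ) (fun j => hmeas j.succ)
    rw [hQ, Fin.prod_univ_succ]

/-! ### Peeling one coordinate -/

lemma lintegral_peel {n : ℕ} (k : Fin (n+1)) (f : (Fin (n+1) → ℝ) → ℝ≥0∞)
    (hf : Measurable f) :
    ∫⁻ z : Fin (n+1) → ℝ, f z
      = ∫⁻ y : Fin n → ℝ, ∫⁻ t : ℝ, f (k.insertNth t y : Fin (n+1) → ℝ) := by
  have mp := (measurePreserving_piFinSuccAbove (fun _ : Fin (n+1) => (volume : Measure ℝ)) k).symm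
  rw [volume_pi, ← mp.lintegral_comp hf]
  have heval : ∀ p : ℝ × (Fin n → ℝ),
      f ((MeasurableEquiv.piFinSuccAbove (fun _ => ℝ) k).symm p) = f (k.insertNth p.1 p.2) := by
    intro p
    rw [MeasurableEquiv.piFinSuccAbove_symm_apply]
    rfl
  simp_rw [heval]
  have hmeas2 : AEMeasurable (Function.uncurry fun t (y : Fin n → ℝ) => f (k.insertNth t y))
      ((volume : Measure ℝ).prod (Measure.pi fun _ => (volume : Measure ℝ))) := by
    have : (Function.uncurry fun t (y : Fin n → ℝ) => f (k.insertNth t y))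
        = f ∘ (MeasurableEquiv.piFinSuccAbove (fun _ => ℝ) k).symm := by
      funext p
      rw [Function.comp_apply, MeasurableEquiv.piFinSuccAbove_symm_apply]
      rfl
    rw [this]
    exact (hf.comp (MeasurableEquiv.piFinSuccAbove (fun _ => ℝ) k).symm.measurable).aemeasurable
  have hmeas2' : AEMeasurable (fun a : ℝ × (Fin n → ℝ) => f (k.insertNth a.1 a.2))
      ((volume : Measure ℝ).prod (Measure.pi fun _ => (volume : Measure ℝ))) := hmeas2
  calc ∫⁻ a : ℝ × (Fin n → ℝ), f (k.insertNth a.1 a.2)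
        ∂((volume : Measure ℝ).prod (Measure.pi fun _ => (volume : Measure ℝ)))
      = ∫⁻ t : ℝ, ∫⁻ y : Fin n → ℝ, f (k.insertNth t y)
          ∂(Measure.pi fun _ => (volume : Measure ℝ)) ∂(volume : Measure ℝ) :=
        MeasureTheory.lintegral_prod _ hmeas2'
    _ = ∫⁻ y : Fin n → ℝ, ∫⁻ t : ℝ, f (k.insertNth t y)
          ∂(volume : Measure ℝ) ∂(Measure.pi fun _ => (volume : Measure ℝ)) :=
        lintegral_lintegral_swap hmeas2
    _ = ∫⁻ y : Fin n → ℝ, ∫⁻ t : ℝ, f (k.insertNth t y) := by rw [← volume_pi]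

/-! ### Pointwise pair bounds -/

lemma one_add_sq_nonneg (a : ℝ) : (0:ℝ) ≤ 1 + a^2 := by nlinarith [sq_nonneg a]

lemma abs_le_sqrt (a b : ℝ) : |b - a| ≤ Real.sqrt ((1 + a^2) * (1 + b^2)) := by
  rw [show |b - a| = Real.sqrt ((b-a)^2) by rw [Real.sqrt_sq_eq_abs]]
  exact Real.sqrt_le_sqrt (by nlinarith [sq_nonneg (1 + a*b)])

lemma pairF_le {β : ℝ} (hβ : 0 ≤ β) (a b : ℝ) :
    pairF β a b ≤ gE a ^ (β/2) * gE b ^ (β/2) := by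
  have h1 : ENNReal.ofReal |b - a| ≤ (gE a * gE b) ^ ((1:ℝ)/2) := by
    rw [gE, gE, ← ENNReal.ofReal_mul (one_add_sq_nonneg a),
      ENNReal.ofReal_rpow_of_nonneg (p := (1:ℝ)/2)
        (mul_nonneg (one_add_sq_nonneg a) (one_add_sq_nonneg b)) (by norm_num),
      ← Real.sqrt_eq_rpow]
    exact ENNReal.ofReal_le_ofReal (abs_le_sqrt a b)
  calc pairF β a b ≤ ((gE a * gE b) ^ ((1:ℝ)/2)) ^ β := ENNReal.rpow_le_rpow h1 hβ
    _ = (gE a * gE b) ^ (β/2) := by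
        rw [← ENNReal.rpow_mul, show (1:ℝ)/2*β = β/2 by ring]
    _ = gE a ^ (β/2) * gE b ^ (β/2) := ENNReal.mul_rpow_of_nonneg _ _ (by linarith)

lemma lower_real (a : ℝ) {t : ℝ} (h0 : 0 ≤ t) (h1 : t ≤ 1) :
    3⁻¹ * Real.sqrt (1 + a^2) * min 1 |a - t| ≤ |t - a| := by
  have hs : (0:ℝ) ≤ Real.sqrt (1 + a^2) := Real.sqrt_nonneg _
  have hsq9 : Real.sqrt 9 = 3 := by
    rw [show (9:ℝ) = 3^2 by norm_num, Real.sqrt_sq (by norm_num : (0:ℝ) ≤ 3)]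
  rw [abs_sub_comm t a]
  rcases le_or_gt 1 |a - t| with h | h
  · rw [min_eq_left h, mul_one]
    have h2 : 1 ≤ (a-t)^2 := by nlinarith [sq_abs (a - t)]
    have habs : |a - t| ≤ (a-t)^2 := by nlinarith [sq_abs (a - t), abs_nonneg (a - t)]
    have hle : a - t ≤ (a-t)^2 := le_trans (le_abs_self _) habs
    have e1 : t * (a - t) ≤ (a-t)^2 := by
      have e2 := mul_le_mul_of_nonneg_left hle h0
      have e3 := mul_le_mul_of_nonneg_right h1 (sq_nonneg (a - t))
      nlinarith
    have ht2 : t^2 ≤ 1 := by nlinarith [mul_nonneg h0 (sub_nonneg.2 h1)]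
    have h9 : 1 + a^2 ≤ 9 * (a - t)^2 := by nlinarith [e1, h2, ht2]
    have h10 := Real.sqrt_le_sqrt h9
    have h11 : Real.sqrt (9 * (a-t)^2) = 3 * |a - t| := by
      rw [Real.sqrt_mul (by norm_num : (0:ℝ) ≤ 9), hsq9, Real.sqrt_sq_eq_abs]
    rw [h11] at h10
    linarith
  · rw [min_eq_right h.le]
    have ha2 : |a| ≤ 2 := by
      have h2 := abs_add_le (a - t) t
      have h3 : |t| ≤ 1 := abs_le.mpr ⟨by linarith, h1⟩
      have : a - t + t = a := by ring
      rw [this] at h2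
      linarith
    have h3 : Real.sqrt (1 + a^2) ≤ 3 := by
      rw [← hsq9]
      exact Real.sqrt_le_sqrt (by nlinarith [sq_abs a, abs_nonneg a])
    nlinarith [abs_nonneg (a - t), mul_nonneg hs (abs_nonneg (a - t))]

lemma pairF_lower {β : ℝ} (hβ : 0 ≤ β) (a : ℝ) {t : ℝ} (h0 : 0 ≤ t) (h1 : t ≤ 1) :
    ENNReal.ofReal (3:ℝ)⁻¹ ^ β * gE a ^ (β/2) * ENNReal.ofReal (min 1 |a - t|) ^ β
      ≤ pairF β a t := by
  have hg : gE a ^ ((1:ℝ)/2) = ENNReal.ofReal (Real.sqrt (1 + a^2)) := by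
    rw [gE, ENNReal.ofReal_rpow_of_nonneg (p := (1:ℝ)/2) (one_add_sq_nonneg a) (by norm_num),
      ← Real.sqrt_eq_rpow]
  have hbase : ENNReal.ofReal (3:ℝ)⁻¹ * gE a ^ ((1:ℝ)/2) * ENNReal.ofReal (min 1 |a - t|)
      ≤ ENNReal.ofReal |t - a| := by
    rw [hg, ← ENNReal.ofReal_mul (by norm_num), ← ENNReal.ofReal_mul (by positivity)]
    exact ENNReal.ofReal_le_ofReal (lower_real a h0 h1)
  calc ENNReal.ofReal (3:ℝ)⁻¹ ^ β * gE a ^ (β/2) * ENNReal.ofReal (min 1 |a - t|) ^ β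
      = (ENNReal.ofReal (3:ℝ)⁻¹ * gE a ^ ((1:ℝ)/2) * ENNReal.ofReal (min 1 |a - t|)) ^ β := by
        rw [ENNReal.mul_rpow_of_nonneg _ _ hβ, ENNReal.mul_rpow_of_nonneg _ _ hβ,
          ← ENNReal.rpow_mul, show (1:ℝ)/2*β = β/2 by ring]
    _ ≤ (ENNReal.ofReal |t - a|) ^ β := ENNReal.rpow_le_rpow hbase hβ
    _ = pairF β a t := rfl

/-! ### One-dimensional integral bounds -/

lemma lint_gE_eV_ne_top (V : ℝ → ℝ) (hV : Measurable V) {v₀ : ℝ} (hv₀ : ∀ x, v₀ ≤ V x)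
    (hVtop : Tendsto (fun x => V x / Real.log (1 + x ^ 2)) atTop atTop)
    (hVbot : Tendsto (fun x => V x / Real.log (1 + x ^ 2)) atBot atTop)
    {c : ℝ} (hc : 0 ≤ c) :
    ∫⁻ t, gE t ^ c * eV V t ≠ ∞ := by
  obtain ⟨L₁, hL₁⟩ := Filter.eventually_atTop.1 (hVtop.eventually_ge_atTop (c+1))
  obtain ⟨L₂, hL₂⟩ := Filter.eventually_atBot.1 (hVbot.eventually_ge_atTop (c+1))
  set L : ℝ := max 1 (max L₁ (-L₂)) with hL
  have hL1 : (1:ℝ) ≤ L := le_max_left _ _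
  have key : ∀ x : ℝ, L < |x| → gE x ^ c * eV V x ≤ ENNReal.ofReal ((1+x^2)⁻¹) := by
    intro x hx
    have hx1 : 1 < x^2 := by nlinarith [sq_abs x, abs_nonneg x]
    have hlog : 0 < Real.log (1 + x^2) := Real.log_pos (by nlinarith)
    have hquot : c + 1 ≤ V x / Real.log (1 + x^2) := by
      rcases lt_abs.1 hx with h | h
      · exact hL₁ x (le_trans (le_trans (le_max_left _ _) (le_max_right 1 _)) h.le)
      · refine hL₂ x ?_
        have : -L₂ ≤ L := le_trans (le_max_right _ _) (le_max_right 1 _)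
        linarith
    have hVx : (c+1) * Real.log (1 + x^2) ≤ V x := (le_div_iff₀ hlog).1 hquot
    have hreal : (1+x^2)^c * Real.exp (-V x) ≤ (1+x^2)⁻¹ := by
      have hexp : Real.exp (-V x) ≤ (1+x^2) ^ (-(c+1)) := by
        rw [Real.rpow_def_of_pos (by nlinarith : (0:ℝ) < 1 + x^2)]
        apply Real.exp_le_exp.2
        nlinarith
      calc (1+x^2)^c * Real.exp (-V x) ≤ (1+x^2)^c * (1+x^2) ^ (-(c+1)) := by
            refine mul_le_mul_of_nonneg_left hexp (Real.rpow_nonneg (by nlinarith) _)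
        _ = (1+x^2) ^ (c + -(c+1)) := (Real.rpow_add (by nlinarith) _ _).symm
        _ = (1+x^2)⁻¹ := by
            rw [show c + -(c+1) = -1 by ring, Real.rpow_neg_one]
    rw [gE, eV, ENNReal.ofReal_rpow_of_nonneg (one_add_sq_nonneg x) hc,
      ← ENNReal.ofReal_mul (Real.rpow_nonneg (one_add_sq_nonneg x) _)]
    exact ENNReal.ofReal_le_ofReal hreal
  have key2 : ∀ x : ℝ, gE x ^ c * eV V x
      ≤ (Set.Icc (-L) L).indicator (fun _ => ENNReal.ofReal ((1+L^2)^c * Real.exp (-v₀))) x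
        + ENNReal.ofReal ((1+x^2)⁻¹) := by
    intro x
    rcases le_or_gt |x| L with h | h
    · have hmem : x ∈ Set.Icc (-L) L := by
        rw [Set.mem_Icc]; constructor <;> [linarith [neg_abs_le x]; linarith [le_abs_self x]]
      rw [Set.indicator_of_mem hmem]
      refine le_trans ?_ le_self_add
      rw [gE, eV, ENNReal.ofReal_rpow_of_nonneg (one_add_sq_nonneg x) hc,
        ← ENNReal.ofReal_mul (Real.rpow_nonneg (one_add_sq_nonneg x) _)]
      refine ENNReal.ofReal_le_ofReal ?_
      have h1 : (1+x^2)^c ≤ (1+L^2)^c := by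
        refine Real.rpow_le_rpow (one_add_sq_nonneg x) ?_ hc
        nlinarith [sq_abs x, abs_nonneg x]
      have h2 : Real.exp (-V x) ≤ Real.exp (-v₀) := Real.exp_le_exp.2 (by linarith [hv₀ x])
      exact mul_le_mul h1 h2 (Real.exp_pos _).le (Real.rpow_nonneg (one_add_sq_nonneg L) _)
    · have hmem : x ∉ Set.Icc (-L) L := by
        rw [Set.mem_Icc]
        intro hmem
        rcases abs_cases x with ⟨he, _⟩ | ⟨he, _⟩ <;> rw [he] at h <;> [linarith [hmem.2]; linarith [hmem.1]]
      rw [Set.indicator_of_notMem hmem, zero_add]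
      exact key x h
  refine ne_top_of_le_ne_top ?_ (lintegral_mono key2)
  rw [lintegral_add_left ((measurable_const).indicator measurableSet_Icc)]
  refine ENNReal.add_ne_top.2 ⟨?_, ?_⟩
  · rw [lintegral_indicator_const measurableSet_Icc]
    exact ENNReal.mul_ne_top ENNReal.ofReal_ne_top (by rw [Real.volume_Icc]; exact ENNReal.ofReal_ne_top)
  · exact integrable_inv_one_add_sq.lintegral_lt_top.ne

lemma exists_goodset (V : ℝ → ℝ) :
    ∃ m : ℝ, (2:ℝ≥0∞)⁻¹ ≤ volume (Set.Icc (0:ℝ) 1 ∩ V ⁻¹' Set.Iic m) := by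
  have hmono : Monotone (fun m : ℕ => Set.Icc (0:ℝ) 1 ∩ V ⁻¹' Set.Iic (m:ℝ)) := by
    intro a b hab
    refine Set.inter_subset_inter_right _ ?_
    intro t ht
    simp only [Set.mem_preimage, Set.mem_Iic] at ht ⊢
    exact le_trans ht (by exact_mod_cast hab)
  have hunion : (⋃ m : ℕ, Set.Icc (0:ℝ) 1 ∩ V ⁻¹' Set.Iic (m:ℝ)) = Set.Icc (0:ℝ) 1 := by
    apply Set.eq_of_subset_of_subset
    · exact Set.iUnion_subset fun m => Set.inter_subset_left
    · intro t ht
      obtain ⟨m, hm⟩ := exists_nat_ge (V t)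
      exact Set.mem_iUnion.2 ⟨m, ht, hm⟩
  have htend := tendsto_measure_iUnion_atTop (μ := volume) hmono
  rw [hunion] at htend
  have hvol : volume (Set.Icc (0:ℝ) 1) = 1 := by
    rw [Real.volume_Icc]; norm_num
  rw [hvol] at htend
  have h21 : (2:ℝ≥0∞)⁻¹ < 1 := ENNReal.inv_lt_one.2 (by norm_num)
  obtain ⟨m, hm⟩ := (htend.eventually (lt_mem_nhds h21)).exists
  exact ⟨m, hm.le⟩

lemma neg_log_le {u : ℝ} (hu : u ∈ Set.Ioc (0:ℝ) 1) :
    -Real.log u ≤ 2 * u ^ (-(1/2) : ℝ) := by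
  have h1 : Real.log (u ^ (-(1/2) : ℝ)) = -(1/2) * Real.log u := Real.log_rpow hu.1 _
  have h2 : Real.log (u ^ (-(1/2) : ℝ)) ≤ u ^ (-(1/2) : ℝ) := by
    have := Real.log_le_sub_one_of_pos (Real.rpow_pos_of_pos hu.1 (-(1/2) : ℝ))
    linarith
  linarith

lemma exists_logbound : ∃ c₁ : ℝ≥0∞, c₁ ≠ ∞ ∧ ∀ s : ℝ,
    ∫⁻ t in Set.Icc (0:ℝ) 1, ENNReal.ofReal (-Real.log (min 1 |s - t|)) ≤ c₁ := by
  classical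
  set h : ℝ → ℝ≥0∞ := fun u => ENNReal.ofReal (-Real.log (min 1 |u|)) with hh
  set φ : ℝ → ℝ≥0∞ :=
    fun u => (Set.Ioc (0:ℝ) 1).indicator (fun v => ENNReal.ofReal (2 * v ^ (-(1/2) : ℝ))) u with hφ
  have hφmeas : Measurable φ := by
    refine Measurable.indicator ?_ measurableSet_Ioc
    exact (((measurable_id (α := ℝ)).pow_const (-(1/2) : ℝ)).const_mul 2).ennreal_ofReal
  have hhφ : ∀ u, h u ≤ φ u + φ (-u) := by
    intro u
    rcases le_or_gt 1 |u| with h1 | h1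
    · rw [hh]; simp only
      rw [min_eq_left h1, Real.log_one, neg_zero, ENNReal.ofReal_zero]
      exact zero_le
    rcases lt_trichotomy u 0 with hu | hu | hu
    · have hmem : -u ∈ Set.Ioc (0:ℝ) 1 := by
        constructor
        · linarith
        · rw [abs_of_neg hu] at h1; linarith
      have hle : h u ≤ φ (-u) := by
        rw [hh, hφ]; simp only [Set.indicator_of_mem hmem]
        rw [min_eq_right h1.le, abs_of_neg hu]
        exact ENNReal.ofReal_le_ofReal (neg_log_le hmem)
      exact le_trans hle le_add_self
    · rw [hh]; simp [hu]
    · have hmem : u ∈ Set.Ioc (0:ℝ) 1 := by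
        constructor
        · exact hu
        · rw [abs_of_pos hu] at h1; linarith
      have hle : h u ≤ φ u := by
        rw [hh, hφ]; simp only [Set.indicator_of_mem hmem]
        rw [min_eq_right h1.le, abs_of_pos hu]
        exact ENNReal.ofReal_le_ofReal (neg_log_le hmem)
      exact le_trans hle le_self_add
  refine ⟨∫⁻ u, h u, ?_, ?_⟩
  · have hφint : ∫⁻ u, φ u ≠ ∞ := by
      rw [hφ, lintegral_indicator measurableSet_Ioc]
      have hInt : IntegrableOn (fun v : ℝ => 2 * v ^ (-(1/2) : ℝ)) (Set.Ioc 0 1) volume := by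
        have := (intervalIntegral.intervalIntegrable_rpow' (a := 0) (b := 1)
          (r := -(1/2)) (by norm_num))
        rw [intervalIntegrable_iff_integrableOn_Ioc_of_le (by norm_num : (0:ℝ) ≤ 1)] at this
        exact this.const_mul 2
      exact hInt.lintegral_lt_top.ne
    have hneg : ∫⁻ u, φ (-u) = ∫⁻ u, φ u :=
      (Measure.measurePreserving_neg (volume : Measure ℝ)).lintegral_comp hφmeas
    refine ne_top_of_le_ne_top ?_ (lintegral_mono hhφ)
    rw [lintegral_add_left hφmeas, hneg]
    exact ENNReal.add_ne_top.2 ⟨hφint, hφint⟩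
  · intro s
    have hcong : ∀ t : ℝ, ENNReal.ofReal (-Real.log (min 1 |s - t|)) = h (t - s) := by
      intro t
      rw [hh]; simp only
      rw [abs_sub_comm t s]
    calc ∫⁻ t in Set.Icc (0:ℝ) 1, ENNReal.ofReal (-Real.log (min 1 |s - t|))
        = ∫⁻ t in Set.Icc (0:ℝ) 1, h (t - s) := by
          exact setLIntegral_congr_fun measurableSet_Icc (fun t _ => hcong t)
      _ ≤ ∫⁻ t, h (t - s) := setLIntegral_le_lintegral _ _
      _ = ∫⁻ t, h t := by
          simp_rw [sub_eq_add_neg]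
          exact lintegral_add_right_eq_self h (-s)

/-! ### The key one-dimensional comparison estimate -/

lemma core_bound (V : ℝ → ℝ) (hV : Measurable V) {κ : ℝ} (hκ : 0 < κ)
    (hAtop : ∫⁻ t, gE t ^ (3*κ/2) * eV V t ≠ ∞)
    {m : ℝ} {S : Set ℝ} (hSm : MeasurableSet S) (hSsub : S ⊆ Set.Icc 0 1)
    (hSV : ∀ t ∈ S, V t ≤ m) (hSvol : (2:ℝ≥0∞)⁻¹ ≤ volume S)
    {c₁ : ℝ≥0∞} (hc₁ : c₁ ≠ ∞)
    (hlog : ∀ s : ℝ, ∫⁻ t in Set.Icc (0:ℝ) 1, ENNReal.ofReal (-Real.log (min 1 |s - t|)) ≤ c₁) :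
    ∃ D : ℝ≥0∞, D ≠ ∞ ∧ ∀ (n : ℕ) (β : ℝ), 0 < β → β * (n+1) ≤ κ →
      ∀ (y : Fin n → ℝ) (κ' : ℝ), 0 ≤ κ' → κ' ≤ κ →
      ∫⁻ t, gE t ^ κ' * ((∏ j, pairF β (y j) t) * eV V t)
        ≤ D * ∫⁻ t, (∏ j, pairF β (y j) t) * eV V t := by
  classical
  set A := ∫⁻ t, gE t ^ (3*κ/2) * eV V t with hA
  set sthr : ℝ≥0∞ := 4 * (ENNReal.ofReal κ * c₁ + 1) with hsthr
  have hsthr0 : sthr ≠ 0 := by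
    rw [hsthr]
    exact mul_ne_zero (by norm_num) (by simp)
  have hsthrtop : sthr ≠ ∞ := by
    rw [hsthr]
    refine ENNReal.mul_ne_top (by norm_num) (ENNReal.add_ne_top.2 ⟨?_, by norm_num⟩)
    exact ENNReal.mul_ne_top ENNReal.ofReal_ne_top hc₁
  set s₀ : ℝ := sthr.toReal with hs₀
  set c₃ : ℝ≥0∞ := (ENNReal.ofReal (3:ℝ)⁻¹ ^ κ
      * (ENNReal.ofReal (Real.exp (-s₀)) * ENNReal.ofReal (Real.exp (-m)))) * 4⁻¹ with hc₃
  have hc₃0 : c₃ ≠ 0 := by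
    rw [hc₃]
    refine mul_ne_zero (mul_ne_zero ?_ (mul_ne_zero ?_ ?_)) (by norm_num)
    · exact (ENNReal.rpow_pos (ENNReal.ofReal_pos.2 (by norm_num)) ENNReal.ofReal_ne_top).ne'
    · exact (ENNReal.ofReal_pos.2 (Real.exp_pos _)).ne'
    · exact (ENNReal.ofReal_pos.2 (Real.exp_pos _)).ne'
  have hc₃top : c₃ ≠ ∞ := by
    rw [hc₃]
    refine ENNReal.mul_ne_top (ENNReal.mul_ne_top ?_
      (ENNReal.mul_ne_top ENNReal.ofReal_ne_top ENNReal.ofReal_ne_top)) (by norm_num)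
    exact ENNReal.rpow_ne_top_of_nonneg hκ.le ENNReal.ofReal_ne_top
  refine ⟨A * c₃⁻¹, ENNReal.mul_ne_top hAtop (ENNReal.inv_ne_top.2 hc₃0), ?_⟩
  intro n β hβ hβn y κ' hκ'0 hκ'κ
  have h1n : (1:ℝ) ≤ (n:ℝ) + 1 := by linarith [Nat.cast_nonneg (α := ℝ) n]
  have hβκ : β ≤ κ := by nlinarith
  have hβn' : β * n ≤ κ := by nlinarith
  set P := ∏ j, gE (y j) ^ (β/2) with hP
  have hP1 : (1:ℝ≥0∞) ≤ P := Finset.one_le_prod' fun j _ => by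
    calc (1:ℝ≥0∞) = gE (y j) ^ (0:ℝ) := ENNReal.rpow_zero.symm
      _ ≤ gE (y j) ^ (β/2) := ENNReal.rpow_le_rpow_of_exponent_le (one_le_gE _) (by linarith)
  have hPtop : P ≠ ∞ := by
    rw [hP]
    exact (ENNReal.prod_lt_top fun j _ =>
      ENNReal.rpow_lt_top_of_nonneg (by linarith) (gE_ne_top _)).ne
  -- Upper bound
  have hupper : ∫⁻ t, gE t ^ κ' * ((∏ j, pairF β (y j) t) * eV V t) ≤ P * A := by
    have hpt : ∀ t, gE t ^ κ' * ((∏ j, pairF β (y j) t) * eV V t)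
        ≤ P * (gE t ^ (3*κ/2) * eV V t) := by
      intro t
      have h1 : (∏ j, pairF β (y j) t) ≤ P * gE t ^ (β/2 * n) := by
        calc ∏ j, pairF β (y j) t ≤ ∏ j, (gE (y j) ^ (β/2) * gE t ^ (β/2)) :=
              Finset.prod_le_prod' fun j _ => pairF_le hβ.le (y j) t
          _ = P * (gE t ^ (β/2)) ^ (n:ℕ) := by
              rw [Finset.prod_mul_distrib, Finset.prod_const, Finset.card_univ,
                Fintype.card_fin]
          _ = P * gE t ^ (β/2 * n) := by
              rw [← ENNReal.rpow_natCast (gE t ^ (β/2)) n, ← ENNReal.rpow_mul]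
      calc gE t ^ κ' * ((∏ j, pairF β (y j) t) * eV V t)
          ≤ gE t ^ κ' * ((P * gE t ^ (β/2 * n)) * eV V t) := by
            exact mul_le_mul_right (mul_le_mul_left h1 _) _
        _ = P * ((gE t ^ κ' * gE t ^ (β/2 * n)) * eV V t) := by ring
        _ = P * (gE t ^ (κ' + β/2 * n) * eV V t) := by
            rw [ENNReal.rpow_add_of_nonneg _ _ hκ'0 (by positivity)]
        _ ≤ P * (gE t ^ (3*κ/2) * eV V t) := by
            refine mul_le_mul_right (mul_le_mul_left ?_ _) _
            exact ENNReal.rpow_le_rpow_of_exponent_le (one_le_gE t) (by nlinarith)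
    calc ∫⁻ t, gE t ^ κ' * ((∏ j, pairF β (y j) t) * eV V t)
        ≤ ∫⁻ t, P * (gE t ^ (3*κ/2) * eV V t) := lintegral_mono hpt
      _ = P * A := by rw [lintegral_const_mul' _ _ hPtop]
  -- Lower bound
  set ψ : Fin n → ℝ → ℝ := fun j t => -Real.log (min 1 |y j - t|) with hψ
  have hψ0 : ∀ j t, 0 ≤ ψ j t := by
    intro j t
    have hmin1 : min 1 |y j - t| ≤ 1 := min_le_left _ _
    have hmin0 : 0 ≤ min 1 |y j - t| := le_min zero_le_one (abs_nonneg _)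
    simp only [hψ]
    linarith [Real.log_nonpos hmin0 hmin1]
  have hψmeas : ∀ j, Measurable (ψ j) := by
    intro j
    exact (measurable_const.min ((measurable_const.sub measurable_id).abs)).log.neg
  set Ψ : ℝ → ℝ≥0∞ := fun t => ∑ j, ENNReal.ofReal (β * ψ j t) with hΨ
  have hΨmeas : Measurable Ψ := by
    exact Finset.measurable_sum _ fun j _ => ((hψmeas j).const_mul β).ennreal_ofReal
  have hΨint : ∫⁻ t in S, Ψ t ≤ ENNReal.ofReal κ * c₁ := by
    rw [hΨ, lintegral_finset_sum _ fun j _ => ((hψmeas j).const_mul β).ennreal_ofReal]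
    have heach : ∀ j : Fin n, ∫⁻ t in S, ENNReal.ofReal (β * ψ j t)
        ≤ ENNReal.ofReal β * c₁ := by
      intro j
      have heq : ∀ t, ENNReal.ofReal (β * ψ j t)
          = ENNReal.ofReal β * ENNReal.ofReal (ψ j t) := fun t => ENNReal.ofReal_mul hβ.le
      simp_rw [heq]
      rw [lintegral_const_mul' _ _ ENNReal.ofReal_ne_top]
      exact mul_le_mul_right (le_trans (lintegral_mono_set hSsub) (hlog (y j))) _
    calc ∑ j, ∫⁻ t in S, ENNReal.ofReal (β * ψ j t)
        ≤ ∑ _j : Fin n, ENNReal.ofReal β * c₁ := Finset.sum_le_sum fun j _ => heach j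
      _ = (n : ℝ≥0∞) * (ENNReal.ofReal β * c₁) := by
          rw [Finset.sum_const, Finset.card_univ, Fintype.card_fin, nsmul_eq_mul]
      _ ≤ ENNReal.ofReal κ * c₁ := by
          rw [← mul_assoc]
          refine mul_le_mul_left ?_ c₁
          rw [show ((n:ℝ≥0∞)) = ENNReal.ofReal (n:ℝ) by simp [ENNReal.ofReal_natCast],
            ← ENNReal.ofReal_mul (by positivity)]
          exact ENNReal.ofReal_le_ofReal (by nlinarith)
  have hbadmeas : MeasurableSet {t : ℝ | sthr ≤ Ψ t} := measurableSet_le measurable_const hΨmeas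
  have hbad : volume (S ∩ {t | sthr ≤ Ψ t}) ≤ 4⁻¹ := by
    have h1 : sthr * (volume.restrict S) {t | sthr ≤ Ψ t} ≤ ∫⁻ t in S, Ψ t :=
      mul_meas_ge_le_lintegral₀ hΨmeas.aemeasurable sthr
    have h2 : (volume.restrict S) {t | sthr ≤ Ψ t} = volume (S ∩ {t | sthr ≤ Ψ t}) := by
      rw [Measure.restrict_apply hbadmeas, Set.inter_comm]
    have h3 : ∫⁻ t in S, Ψ t ≤ sthr * 4⁻¹ := by
      refine le_trans hΨint ?_
      have h4 : sthr * 4⁻¹ = ENNReal.ofReal κ * c₁ + 1 := by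
        rw [hsthr, mul_comm (4:ℝ≥0∞) _, mul_assoc,
          ENNReal.mul_inv_cancel (by norm_num) (by norm_num), mul_one]
      rw [h4]
      exact le_self_add
    rw [h2] at h1
    exact (ENNReal.mul_le_mul_iff_right hsthr0 hsthrtop).1 (le_trans h1 h3)
  set Sg : Set ℝ := (S ∩ {t | Ψ t < sthr}) \ (⋃ j, {y j}) with hSgdef
  have hSgmeas : MeasurableSet Sg :=
    (hSm.inter (measurableSet_lt hΨmeas measurable_const)).diff
      (MeasurableSet.iUnion fun j => measurableSet_singleton _)
  have hSgvol : 4⁻¹ ≤ volume Sg := by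
    have hT0 : volume (⋃ j : Fin n, ({y j} : Set ℝ)) = 0 :=
      measure_iUnion_null fun j => Real.volume_singleton
    rw [hSgdef, measure_diff_null hT0]
    have hsplit : volume S ≤ volume (S ∩ {t | sthr ≤ Ψ t}) + volume (S ∩ {t | Ψ t < sthr}) := by
      refine le_trans (measure_mono ?_) (measure_union_le _ _)
      intro t ht
      rcases le_or_gt sthr (Ψ t) with h | h
      · exact Or.inl ⟨ht, h⟩
      · exact Or.inr ⟨ht, h⟩
    have h4 : (2:ℝ≥0∞)⁻¹ ≤ 4⁻¹ + volume (S ∩ {t | Ψ t < sthr}) :=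
      le_trans (le_trans hSvol hsplit) (add_le_add_left hbad _)
    have h44 : (4:ℝ≥0∞)⁻¹ + 4⁻¹ = 2⁻¹ := by
      rw [← two_mul, show ((4:ℝ≥0∞)) = 2*2 by norm_num,
        ENNReal.mul_inv (by norm_num) (by norm_num), ← mul_assoc,
        ENNReal.mul_inv_cancel (by norm_num) (by norm_num), one_mul]
    have h5 : (2:ℝ≥0∞)⁻¹ - 4⁻¹ = 4⁻¹ := by
      rw [← h44, ENNReal.add_sub_cancel_right (by norm_num)]
    calc (4:ℝ≥0∞)⁻¹ = 2⁻¹ - 4⁻¹ := h5.symm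
      _ ≤ volume (S ∩ {t | Ψ t < sthr}) := tsub_le_iff_left.2 h4
  -- pointwise lower bound on the good set
  have hptlow : ∀ t ∈ Sg,
      (ENNReal.ofReal (3:ℝ)⁻¹ ^ κ * (ENNReal.ofReal (Real.exp (-s₀))
        * ENNReal.ofReal (Real.exp (-m)))) * P
      ≤ (∏ j, pairF β (y j) t) * eV V t := by
    intro t ht
    obtain ⟨⟨htS, htΨ⟩, htT⟩ := ht
    have ht01 := hSsub htS
    have htne : ∀ j, y j - t ≠ 0 := by
      intro j hj
      refine htT (Set.mem_iUnion.2 ⟨j, ?_⟩)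
      have : y j = t := by linarith [hj]
      simp [this]
    have h2 : (∏ j, (ENNReal.ofReal (3:ℝ)⁻¹ ^ β * gE (y j) ^ (β/2)
        * ENNReal.ofReal (min 1 |y j - t|) ^ β)) ≤ ∏ j, pairF β (y j) t :=
      Finset.prod_le_prod' fun j _ => pairF_lower hβ.le (y j) ht01.1 ht01.2
    rw [Finset.prod_mul_distrib, Finset.prod_mul_distrib] at h2
    have hconst : ENNReal.ofReal (3:ℝ)⁻¹ ^ κ
        ≤ ∏ _j : Fin n, ENNReal.ofReal (3:ℝ)⁻¹ ^ β := by
      rw [Finset.prod_const, Finset.card_univ, Fintype.card_fin,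
        ← ENNReal.rpow_natCast (ENNReal.ofReal (3:ℝ)⁻¹ ^ β) n, ← ENNReal.rpow_mul]
      refine ENNReal.rpow_le_rpow_of_exponent_ge ?_ (by nlinarith)
      exact ENNReal.ofReal_le_one.2 (by norm_num)
    have hmin : ENNReal.ofReal (Real.exp (-s₀))
        ≤ ∏ j, ENNReal.ofReal (min 1 |y j - t|) ^ β := by
      have heq : ∀ j : Fin n, ENNReal.ofReal (min 1 |y j - t|) ^ β
          = ENNReal.ofReal ((min 1 |y j - t|) ^ β) := fun j =>
        ENNReal.ofReal_rpow_of_nonneg (le_min zero_le_one (abs_nonneg _)) hβ.le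
      simp_rw [heq]
      rw [← ENNReal.ofReal_prod_of_nonneg fun j _ =>
        Real.rpow_nonneg (le_min zero_le_one (abs_nonneg _)) β]
      refine ENNReal.ofReal_le_ofReal ?_
      have hpos : ∀ j : Fin n, 0 < min 1 |y j - t| := fun j =>
        lt_min one_pos (abs_pos.2 (htne j))
      have hprod : ∏ j, (min 1 |y j - t|) ^ β
          = Real.exp (∑ j, β * Real.log (min 1 |y j - t|)) := by
        rw [Real.exp_sum]
        refine Finset.prod_congr rfl fun j _ => ?_
        rw [Real.rpow_def_of_pos (hpos j), mul_comm]
      rw [hprod]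
      refine Real.exp_le_exp.2 ?_
      have hsum : ∑ j, β * Real.log (min 1 |y j - t|) = -(∑ j, β * ψ j t) := by
        rw [← Finset.sum_neg_distrib]
        refine Finset.sum_congr rfl fun j _ => ?_
        simp only [hψ]
        ring
      rw [hsum]
      have hΨle : ∑ j, β * ψ j t ≤ s₀ := by
        have h5 : ENNReal.ofReal (∑ j, β * ψ j t) ≤ sthr := by
          rw [ENNReal.ofReal_sum_of_nonneg fun j _ => mul_nonneg hβ.le (hψ0 j t)]
          exact htΨ.le
        exact (ENNReal.ofReal_le_iff_le_toReal hsthrtop).1 h5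
      linarith
    have hev : ENNReal.ofReal (Real.exp (-m)) ≤ eV V t :=
      ENNReal.ofReal_le_ofReal (Real.exp_le_exp.2 (by linarith [hSV t htS]))
    calc (ENNReal.ofReal (3:ℝ)⁻¹ ^ κ * (ENNReal.ofReal (Real.exp (-s₀))
          * ENNReal.ofReal (Real.exp (-m)))) * P
        = ((ENNReal.ofReal (3:ℝ)⁻¹ ^ κ * P) * ENNReal.ofReal (Real.exp (-s₀)))
            * ENNReal.ofReal (Real.exp (-m)) := by ring
      _ ≤ (((∏ _j : Fin n, ENNReal.ofReal (3:ℝ)⁻¹ ^ β) * ∏ j, gE (y j) ^ (β/2))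
            * ∏ j, ENNReal.ofReal (min 1 |y j - t|) ^ β) * eV V t := by
          refine mul_le_mul' (mul_le_mul' (mul_le_mul' hconst le_rfl) hmin) hev
      _ ≤ (∏ j, pairF β (y j) t) * eV V t := mul_le_mul' h2 le_rfl
  have hlower : c₃ * P ≤ ∫⁻ t, (∏ j, pairF β (y j) t) * eV V t := by
    calc c₃ * P
        = ((ENNReal.ofReal (3:ℝ)⁻¹ ^ κ * (ENNReal.ofReal (Real.exp (-s₀))
            * ENNReal.ofReal (Real.exp (-m)))) * P) * 4⁻¹ := by rw [hc₃]; ring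
      _ ≤ ((ENNReal.ofReal (3:ℝ)⁻¹ ^ κ * (ENNReal.ofReal (Real.exp (-s₀))
            * ENNReal.ofReal (Real.exp (-m)))) * P) * volume Sg :=
          mul_le_mul_right hSgvol _
      _ = ∫⁻ _t in Sg, (ENNReal.ofReal (3:ℝ)⁻¹ ^ κ * (ENNReal.ofReal (Real.exp (-s₀))
            * ENNReal.ofReal (Real.exp (-m)))) * P := (setLIntegral_const _ _).symm
      _ ≤ ∫⁻ t in Sg, (∏ j, pairF β (y j) t) * eV V t :=
          setLIntegral_mono' hSgmeas hptlow
      _ ≤ ∫⁻ t, (∏ j, pairF β (y j) t) * eV V t := setLIntegral_le_lintegral _ _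
  calc ∫⁻ t, gE t ^ κ' * ((∏ j, pairF β (y j) t) * eV V t)
      ≤ P * A := hupper
    _ = (A * c₃⁻¹) * (c₃ * P) := by
        rw [show (A * c₃⁻¹) * (c₃ * P) = (c₃⁻¹ * c₃) * (A * P) by ring,
          ENNReal.inv_mul_cancel hc₃0 hc₃top, one_mul, mul_comm]
    _ ≤ (A * c₃⁻¹) * ∫⁻ t, (∏ j, pairF β (y j) t) * eV V t :=
        mul_le_mul_right hlower _

/-! ### Partition function: finiteness and positivity -/

lemma Z_ne_top (V : ℝ → ℝ) (hV : Measurable V) {v₀ : ℝ} (hv₀ : ∀ x, v₀ ≤ V x)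
    (hVtop : Tendsto (fun x => V x / Real.log (1 + x ^ 2)) atTop atTop)
    (hVbot : Tendsto (fun x => V x / Real.log (1 + x ^ 2)) atBot atTop)
    {β : ℝ} (hβ : 0 < β) (N : ℕ) :
    ∫⁻ lam : Fin N → ℝ, Wfun V β lam ≠ ∞ := by
  set c : ℝ := β/2 * (N*N) with hc
  have hc0 : (0:ℝ) ≤ c := by positivity
  have hpt : ∀ lam : Fin N → ℝ, Wfun V β lam ≤ ∏ i, (gE (lam i) ^ c * eV V (lam i)) := by
    intro lam
    rw [Wfun, Finset.prod_mul_distrib]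
    refine mul_le_mul' ?_ le_rfl
    set Q := ∏ i, gE (lam i) with hQ
    have hQ1 : (1:ℝ≥0∞) ≤ Q := Finset.one_le_prod' fun i _ => one_le_gE _
    have hpair : ∀ i j : Fin N, pairF β (lam i) (lam j) ≤ Q ^ (β/2) := by
      intro i j
      rcases eq_or_ne i j with rfl | hij
      · rw [pairF, sub_self, abs_zero, ENNReal.ofReal_zero, ENNReal.zero_rpow_of_pos hβ]
        exact zero_le
      · refine le_trans (pairF_le hβ.le _ _) ?_
        rw [← ENNReal.mul_rpow_of_nonneg _ _ (by linarith)]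
        refine ENNReal.rpow_le_rpow ?_ (by linarith)
        calc gE (lam i) * gE (lam j) = ∏ p ∈ ({i, j} : Finset (Fin N)), gE (lam p) := by
              rw [Finset.prod_pair hij]
          _ ≤ Q := Finset.prod_le_prod_of_subset_of_one_le' (Finset.subset_univ _)
              (fun p _ _ => one_le_gE _)
    have hQb1 : (1:ℝ≥0∞) ≤ Q ^ (β/2) := by
      calc (1:ℝ≥0∞) = Q ^ (0:ℝ) := ENNReal.rpow_zero.symm
        _ ≤ Q ^ (β/2) := ENNReal.rpow_le_rpow_of_exponent_le hQ1 (by linarith)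
    have hPP : PP β lam ≤ (Q ^ (β/2)) ^ (N*N) := by
      calc PP β lam ≤ ∏ _i : Fin N, ∏ _j ∈ Finset.Ioi _i, Q ^ (β/2) :=
            Finset.prod_le_prod' fun i _ => Finset.prod_le_prod' fun j _ => hpair i j
        _ = ∏ i : Fin N, (Q ^ (β/2)) ^ (Finset.Ioi i).card := by
            simp [Finset.prod_const]
        _ ≤ ∏ _i : Fin N, (Q ^ (β/2)) ^ N := Finset.prod_le_prod' fun i _ =>
            pow_le_pow_right₀ hQb1 (le_trans (Finset.card_le_univ _) (by simp))
        _ = (Q ^ (β/2)) ^ (N*N) := by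
            rw [Finset.prod_const, Finset.card_univ, Fintype.card_fin, ← pow_mul]
    refine le_trans hPP (le_of_eq ?_)
    have h1 : (Q ^ (β/2)) ^ (N*N) = Q ^ c := by
      rw [← ENNReal.rpow_natCast (Q ^ (β/2)) (N*N), ← ENNReal.rpow_mul, hc]
      congr 1
      push_cast
      ring
    rw [h1, hQ, ← ENNReal.prod_rpow_of_nonneg hc0]
  have h1 : ∫⁻ lam : Fin N → ℝ, Wfun V β lam
      ≤ ∏ _i : Fin N, ∫⁻ t, gE t ^ c * eV V t := by
    refine le_trans (lintegral_mono hpt) (le_of_eq ?_)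
    exact lintegral_pi_prod _ fun i => (measurable_gE.pow_const c).mul (measurable_eV hV)
  refine ne_top_of_le_ne_top ?_ h1
  rw [Finset.prod_const, Finset.card_univ, Fintype.card_fin]
  exact ENNReal.pow_ne_top (lint_gE_eV_ne_top V hV hv₀ hVtop hVbot hc0)

lemma Z_ne_zero (V : ℝ → ℝ) (hV : Measurable V) {β : ℝ} (hβ : 0 < β) (N : ℕ) :
    ∫⁻ lam : Fin N → ℝ, Wfun V β lam ≠ 0 := by
  classical
  set h : Fin N → ℝ → ℝ≥0∞ :=
    fun i => (Set.Icc (2*(i:ℝ)) (2*(i:ℝ)+1)).indicator (eV V) with hh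
  have hmeas : ∀ i, Measurable (h i) := fun i =>
    (measurable_eV hV).indicator measurableSet_Icc
  have hpt : ∀ lam : Fin N → ℝ, ∏ i, h i (lam i) ≤ Wfun V β lam := by
    intro lam
    by_cases hall : ∀ i : Fin N, lam i ∈ Set.Icc (2*(i:ℝ)) (2*(i:ℝ)+1)
    · have heq : ∏ i, h i (lam i) = ∏ i, eV V (lam i) :=
        Finset.prod_congr rfl fun i _ => Set.indicator_of_mem (hall i) _
      rw [heq, Wfun]
      refine le_mul_of_one_le_left (zero_le) ?_
      rw [PP]
      refine Finset.one_le_prod' fun i _ => Finset.one_le_prod' fun j hj => ?_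
      have hij : i < j := Finset.mem_Ioi.1 hj
      have hcast : (i:ℝ) + 1 ≤ (j:ℝ) := by
        have : (i:ℕ) + 1 ≤ (j:ℕ) := Nat.succ_le_of_lt hij
        exact_mod_cast this
      have hi := hall i
      have hjm := hall j
      rw [Set.mem_Icc] at hi hjm
      have h1 : (1:ℝ) ≤ |lam j - lam i| := by
        have : (1:ℝ) ≤ lam j - lam i := by linarith
        linarith [le_abs_self (lam j - lam i)]
      calc (1:ℝ≥0∞) = 1 ^ β := (ENNReal.one_rpow β).symm
        _ ≤ pairF β (lam i) (lam j) := by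
            rw [pairF]
            exact ENNReal.rpow_le_rpow (ENNReal.one_le_ofReal.2 h1) hβ.le
    · push_neg at hall
      obtain ⟨i, hi⟩ := hall
      rw [Finset.prod_eq_zero (Finset.mem_univ i) (Set.indicator_of_notMem hi _)]
      exact zero_le
  have h1 : ∏ i : Fin N, ∫⁻ t, h i t ≤ ∫⁻ lam : Fin N → ℝ, Wfun V β lam := by
    rw [← lintegral_pi_prod _ hmeas]
    exact lintegral_mono hpt
  intro hz
  rw [hz] at h1
  have h2 : ∏ i : Fin N, ∫⁻ t, h i t = 0 := le_antisymm h1 (zero_le)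
  obtain ⟨i, _, hi0⟩ := Finset.prod_eq_zero_iff.1 h2
  rw [hh] at hi0
  simp only at hi0
  rw [lintegral_indicator measurableSet_Icc,
    lintegral_eq_zero_iff (measurable_eV hV)] at hi0
  rw [Filter.EventuallyEq, ae_iff] at hi0
  have hset : {a : ℝ | ¬ eV V a = (0 : ℝ → ℝ≥0∞) a} = Set.univ :=
    Set.eq_univ_of_forall fun t => by simp [eV_ne_zero V t]
  rw [hset, Measure.restrict_apply_univ, Real.volume_Icc] at hi0
  have : (2*(i:ℝ)+1) - 2*(i:ℝ) = 1 := by ring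
  rw [this] at hi0
  simp at hi0

/-! ### Coordinate moment bound and Hölder step -/

lemma coord_bound (V : ℝ → ℝ) (hV : Measurable V) {β : ℝ} (hβ : 0 < β) {n : ℕ}
    {D : ℝ≥0∞} (hDtop : D ≠ ∞)
    (hD : ∀ (y : Fin n → ℝ) (κ' : ℝ), 0 ≤ κ' → κ' = β * (n+1) →
      ∫⁻ t, gE t ^ κ' * ((∏ j, pairF β (y j) t) * eV V t)
        ≤ D * ∫⁻ t, (∏ j, pairF β (y j) t) * eV V t)
    (k : Fin (n+1)) :
    ∫⁻ lam : Fin (n+1) → ℝ, gE (lam k) ^ (β*((n:ℝ)+1)) * Wfun V β lam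
      ≤ D * ∫⁻ lam : Fin (n+1) → ℝ, Wfun V β lam := by
  have hm1 : Measurable fun lam : Fin (n+1) → ℝ =>
      gE (lam k) ^ (β*((n:ℝ)+1)) * Wfun V β lam :=
    ((measurable_gE.comp (measurable_pi_apply k)).pow_const _).mul (measurable_Wfun hV β)
  rw [lintegral_peel k _ hm1, lintegral_peel k _ (measurable_Wfun hV β)]
  have inner1 : ∀ y : Fin n → ℝ,
      (∫⁻ t, gE ((k.insertNth t y : Fin (n+1) → ℝ) k) ^ (β*((n:ℝ)+1))
        * Wfun V β (k.insertNth t y : Fin (n+1) → ℝ))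
      = (∫⁻ t, gE t ^ (β*((n:ℝ)+1)) * ((∏ j, pairF β (y j) t) * eV V t))
          * Wfun V β y := by
    intro y
    rw [← lintegral_mul_const' (Wfun V β y) _ (Wfun_ne_top hβ.le y)]
    refine lintegral_congr fun t => ?_
    rw [Fin.insertNth_apply_same, Wfun_insertNth V hβ.le k t y]
    ring
  have inner2 : ∀ y : Fin n → ℝ,
      (∫⁻ t, Wfun V β (k.insertNth t y : Fin (n+1) → ℝ))
      = (∫⁻ t, (∏ j, pairF β (y j) t) * eV V t) * Wfun V β y := by
    intro y
    rw [← lintegral_mul_const' (Wfun V β y) _ (Wfun_ne_top hβ.le y)]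
    refine lintegral_congr fun t => ?_
    rw [Wfun_insertNth V hβ.le k t y]
  calc ∫⁻ y : Fin n → ℝ, ∫⁻ t, gE ((k.insertNth t y : Fin (n+1) → ℝ) k) ^ (β*((n:ℝ)+1))
        * Wfun V β (k.insertNth t y : Fin (n+1) → ℝ)
      = ∫⁻ y : Fin n → ℝ, (∫⁻ t, gE t ^ (β*((n:ℝ)+1))
          * ((∏ j, pairF β (y j) t) * eV V t)) * Wfun V β y := lintegral_congr inner1
    _ ≤ ∫⁻ y : Fin n → ℝ, (D * ∫⁻ t, (∏ j, pairF β (y j) t) * eV V t) * Wfun V β y := by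
        refine lintegral_mono fun y => mul_le_mul_left ?_ _
        exact hD y (β*((n:ℝ)+1)) (by positivity) rfl
    _ = D * ∫⁻ y : Fin n → ℝ, (∫⁻ t, (∏ j, pairF β (y j) t) * eV V t) * Wfun V β y := by
        simp_rw [mul_assoc]
        exact lintegral_const_mul' D _ hDtop
    _ = D * ∫⁻ y : Fin n → ℝ, ∫⁻ t, Wfun V β (k.insertNth t y : Fin (n+1) → ℝ) := by
        rw [lintegral_congr inner2]

lemma holder_bound (V : ℝ → ℝ) (hV : Measurable V) {β : ℝ} (hβ : 0 < β) (N : ℕ)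
    {D : ℝ≥0∞} (hDtop : D ≠ ∞)
    (hcoord : ∀ k : Fin N, ∫⁻ lam : Fin N → ℝ, gE (lam k) ^ (β*(N:ℝ)) * Wfun V β lam
      ≤ D * ∫⁻ lam : Fin N → ℝ, Wfun V β lam) :
    ∫⁻ lam : Fin N → ℝ, (∏ i, gE (lam i) ^ β) * Wfun V β lam
      ≤ (D + 1) * ∫⁻ lam : Fin N → ℝ, Wfun V β lam := by
  rcases Nat.eq_zero_or_pos N with hN | hN
  · subst hN
    simp only [Finset.univ_eq_empty, Finset.prod_empty, one_mul]
    exact le_mul_of_one_le_left (zero_le) le_add_self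
  · have hN0 : ((N:ℝ)) ≠ 0 := by positivity
    have hrepr : ∀ lam : Fin N → ℝ, (∏ i, gE (lam i) ^ β) * Wfun V β lam
        = ∏ i : Fin N, (gE (lam i) ^ (β*(N:ℝ)) * Wfun V β lam) ^ ((1:ℝ)/(N:ℝ)) := by
      intro lam
      have hterm : ∀ i : Fin N, (gE (lam i) ^ (β*(N:ℝ)) * Wfun V β lam) ^ ((1:ℝ)/(N:ℝ))
          = gE (lam i) ^ β * Wfun V β lam ^ ((1:ℝ)/(N:ℝ)) := by
        intro i
        rw [ENNReal.mul_rpow_of_nonneg _ _ (by positivity), ← ENNReal.rpow_mul]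
        congr 2
        field_simp
      simp_rw [hterm]
      rw [Finset.prod_mul_distrib, Finset.prod_const, Finset.card_univ, Fintype.card_fin,
        ← ENNReal.rpow_natCast (Wfun V β lam ^ ((1:ℝ)/(N:ℝ))) N, ← ENNReal.rpow_mul,
        show (1:ℝ)/(N:ℝ) * (N:ℝ) = 1 by field_simp, ENNReal.rpow_one]
    calc ∫⁻ lam : Fin N → ℝ, (∏ i, gE (lam i) ^ β) * Wfun V β lam
        = ∫⁻ lam : Fin N → ℝ,
            ∏ i : Fin N, (gE (lam i) ^ (β*(N:ℝ)) * Wfun V β lam) ^ ((1:ℝ)/(N:ℝ)) :=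
          lintegral_congr hrepr
      _ ≤ ∏ i : Fin N, (∫⁻ lam : Fin N → ℝ,
            gE (lam i) ^ (β*(N:ℝ)) * Wfun V β lam) ^ ((1:ℝ)/(N:ℝ)) := by
          refine ENNReal.lintegral_prod_norm_pow_le _ (fun i _ => ?_) ?_ (fun i _ => by positivity)
          · exact (((measurable_gE.comp (measurable_pi_apply i)).pow_const _).mul
              (measurable_Wfun hV β)).aemeasurable
          · rw [Finset.sum_const, Finset.card_univ, Fintype.card_fin, nsmul_eq_mul]
            field_simp
      _ ≤ ∏ _i : Fin N, ((D + 1) * ∫⁻ lam : Fin N → ℝ, Wfun V β lam) ^ ((1:ℝ)/(N:ℝ)) := by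
          refine Finset.prod_le_prod' fun i _ => ENNReal.rpow_le_rpow ?_ (by positivity)
          exact le_trans (hcoord i) (mul_le_mul_left le_self_add _)
      _ = (D + 1) * ∫⁻ lam : Fin N → ℝ, Wfun V β lam := by
          rw [Finset.prod_const, Finset.card_univ, Fintype.card_fin,
            ← ENNReal.rpow_natCast _ N, ← ENNReal.rpow_mul,
            show (1:ℝ)/(N:ℝ) * (N:ℝ) = 1 by field_simp, ENNReal.rpow_one]

lemma full_bound (V : ℝ → ℝ) (hV : Measurable V) {κ β : ℝ} (hβ : 0 < β) (N : ℕ)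
    (hβN : β * (N:ℝ) ≤ κ) {D : ℝ≥0∞} (hDtop : D ≠ ∞)
    (hD : ∀ (n : ℕ) (β : ℝ), 0 < β → β * (n+1) ≤ κ →
      ∀ (y : Fin n → ℝ) (κ' : ℝ), 0 ≤ κ' → κ' ≤ κ →
      ∫⁻ t, gE t ^ κ' * ((∏ j, pairF β (y j) t) * eV V t)
        ≤ D * ∫⁻ t, (∏ j, pairF β (y j) t) * eV V t) :
    ∫⁻ lam : Fin N → ℝ, (∏ i, gE (lam i) ^ β) * Wfun V β lam
      ≤ (D + 1) * ∫⁻ lam : Fin N → ℝ, Wfun V β lam := by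
  refine holder_bound V hV hβ N hDtop ?_
  intro k
  rcases N with _ | n
  · exact absurd k.2 (by simp)
  · have hcast : ((n+1 : ℕ) : ℝ) = (n:ℝ) + 1 := by push_cast; ring
    have hβn1 : β * ((n:ℝ)+1) ≤ κ := by rw [← hcast]; exact hβN
    have hcoord := coord_bound V hV hβ (n := n) hDtop
      (fun y κ' h0 heq => by
        rw [heq]
        exact hD n β hβ hβn1 y (β*((n:ℝ)+1)) (by positivity) (by nlinarith [hβn1, hβ.le])) k
    simpa [hcast] using hcoord

end BetaAux

open BetaAux
open scoped ENNReal

theorem stmt9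
    (V : ℝ → ℝ) (hVmeas : Measurable V) (hVbdd : BddBelow (Set.range V))
    (hVtop : Tendsto (fun x => V x / Real.log (1 + x ^ 2)) atTop atTop)
    (hVbot : Tendsto (fun x => V x / Real.log (1 + x ^ 2)) atBot atTop)
    (κ : ℝ) (hκ : 0 < κ) (K : Set ℝ) (hK : IsCompact K) :
    ∃ B : ℝ, ∀ (β : ℝ) (N : ℕ) (x : ℝ), 0 < β → β * N ≤ κ → x ∈ K →
      (∫ lam, (∏ i : Fin N, |x - lam i| ^ β) ^ 2 ∂(betaMeasure V β N)) ≤ B := by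
  classical
  obtain ⟨r, hr⟩ := hK.isBounded.subset_closedBall 0
  set R : ℝ := max r 0 with hRdef
  have hKR : ∀ x ∈ K, |x| ≤ R := by
    intro x hx
    have h1 := hr hx
    rw [Metric.mem_closedBall, Real.dist_eq, sub_zero] at h1
    exact le_trans h1 (le_max_left _ _)
  obtain ⟨v₀, hv₀'⟩ := hVbdd
  have hv₀ : ∀ x, v₀ ≤ V x := fun x => hv₀' (Set.mem_range_self x)
  have hAtop : ∫⁻ t, gE t ^ (3*κ/2) * eV V t ≠ ∞ :=
    lint_gE_eV_ne_top V hVmeas hv₀ hVtop hVbot (by positivity)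
  obtain ⟨m, hm⟩ := exists_goodset V
  obtain ⟨c₁, hc₁, hlog⟩ := exists_logbound
  obtain ⟨D, hDtop, hD⟩ := core_bound V hVmeas hκ hAtop
    (measurableSet_Icc.inter (hVmeas measurableSet_Iic)) Set.inter_subset_left
    (fun t ht => ht.2) hm hc₁ hlog
  have hD1top : D + 1 ≠ ∞ := ENNReal.add_ne_top.2 ⟨hDtop, ENNReal.one_ne_top⟩
  set CR : ℝ≥0∞ := ENNReal.ofReal (1 + R^2) ^ κ with hCRdef
  have hCRtop : CR ≠ ∞ := ENNReal.rpow_ne_top_of_nonneg hκ.le ENNReal.ofReal_ne_top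
  refine ⟨(CR * (D + 1)).toReal, ?_⟩
  intro β N x hβ hβN hxK
  have hZtop := Z_ne_top V hVmeas hv₀ hVtop hVbot hβ N
  have hZ0 := Z_ne_zero V hVmeas hβ N
  have hfmeas : Measurable fun lam : Fin N → ℝ => (∏ i, |x - lam i| ^ β) ^ 2 := by
    apply Measurable.pow_const
    exact Finset.measurable_prod _ fun i _ =>
      ((measurable_const.sub (measurable_pi_apply i)).abs).pow_const β
  have hofReal_f : ∀ lam : Fin N → ℝ, ENNReal.ofReal ((∏ i, |x - lam i| ^ β) ^ 2)
      = ∏ i, (ENNReal.ofReal |x - lam i|) ^ (2*β) := by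
    intro lam
    rw [ENNReal.ofReal_pow (Finset.prod_nonneg fun i _ => Real.rpow_nonneg (abs_nonneg _) β),
      ENNReal.ofReal_prod_of_nonneg fun i _ => Real.rpow_nonneg (abs_nonneg _) β,
      ← Finset.prod_pow]
    refine Finset.prod_congr rfl fun i _ => ?_
    rw [← ENNReal.ofReal_rpow_of_nonneg (abs_nonneg _) hβ.le,
      ← ENNReal.rpow_natCast (ENNReal.ofReal |x - lam i| ^ β) 2, ← ENNReal.rpow_mul,
      show β * ((2:ℕ):ℝ) = 2*β by push_cast; ring]
  have hWd : (fun lam : Fin N → ℝ => ENNReal.ofReal (betaWeight V β N lam))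
      = fun lam => Wfun V β lam :=
    funext fun lam => ofReal_betaWeight V hβ.le N lam
  have hZpart : ENNReal.ofReal (Zpart V β N) = ∫⁻ lam : Fin N → ℝ, Wfun V β lam := by
    rw [Zpart, integral_eq_lintegral_of_nonneg_ae
      (Filter.Eventually.of_forall (betaWeight_nonneg V β N))
      (measurable_betaWeight hVmeas β).aestronglyMeasurable]
    have h1 : ∫⁻ lam : Fin N → ℝ, ENNReal.ofReal (betaWeight V β N lam)
        = ∫⁻ lam : Fin N → ℝ, Wfun V β lam :=
      lintegral_congr fun lam => ofReal_betaWeight V hβ.le N lam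
    rw [h1, ENNReal.ofReal_toReal hZtop]
  have hmain : (∫ lam, (∏ i : Fin N, |x - lam i| ^ β) ^ 2 ∂(betaMeasure V β N))
      = ((∫⁻ lam : Fin N → ℝ, Wfun V β lam)⁻¹
          * ∫⁻ lam : Fin N → ℝ, Wfun V β lam
            * ∏ i, (ENNReal.ofReal |x - lam i|) ^ (2*β)).toReal := by
    rw [integral_eq_lintegral_of_nonneg_ae
      (Filter.Eventually.of_forall fun lam => sq_nonneg _) hfmeas.aestronglyMeasurable]
    congr 1
    rw [betaMeasure, lintegral_smul_measure, hZpart, hWd,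
      lintegral_withDensity_eq_lintegral_mul volume (measurable_Wfun hVmeas β)
        hfmeas.ennreal_ofReal]
    congr 1
    refine lintegral_congr fun lam => ?_
    rw [Pi.mul_apply, hofReal_f lam]
  have hfull := full_bound V hVmeas hβ N hβN hDtop hD
  have hxR : x^2 ≤ R^2 := by
    have h1 := hKR x hxK
    nlinarith [abs_nonneg x, sq_abs x]
  have hstepA : ∀ lam : Fin N → ℝ, (∏ i, (ENNReal.ofReal |x - lam i|) ^ (2*β))
      ≤ CR * ∏ i, gE (lam i) ^ β := by
    intro lam
    have h1 : ∀ i : Fin N, (ENNReal.ofReal |x - lam i|) ^ (2*β)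
        ≤ gE (lam i) ^ β * gE x ^ β := by
      intro i
      have h := pairF_le (show (0:ℝ) ≤ 2*β by linarith) (lam i) x
      rw [show 2*β/2 = β by ring] at h
      simpa [pairF] using h
    calc (∏ i, (ENNReal.ofReal |x - lam i|) ^ (2*β))
        ≤ ∏ i, (gE (lam i) ^ β * gE x ^ β) := Finset.prod_le_prod' fun i _ => h1 i
      _ = (∏ i, gE (lam i) ^ β) * (gE x ^ β) ^ (N:ℕ) := by
          rw [Finset.prod_mul_distrib, Finset.prod_const, Finset.card_univ, Fintype.card_fin]
      _ ≤ (∏ i, gE (lam i) ^ β) * CR := by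
          refine mul_le_mul_right ?_ _
          rw [← ENNReal.rpow_natCast (gE x ^ β) N, ← ENNReal.rpow_mul]
          calc gE x ^ (β * (N:ℝ)) ≤ ENNReal.ofReal (1 + R^2) ^ (β * (N:ℝ)) := by
                refine ENNReal.rpow_le_rpow ?_ (by positivity)
                exact ENNReal.ofReal_le_ofReal (by nlinarith)
            _ ≤ CR := ENNReal.rpow_le_rpow_of_exponent_le
                (ENNReal.one_le_ofReal.2 (by nlinarith [sq_nonneg R])) hβN
      _ = CR * ∏ i, gE (lam i) ^ β := mul_comm _ _
  have hT : ∫⁻ lam : Fin N → ℝ, Wfun V β lam * ∏ i, (ENNReal.ofReal |x - lam i|) ^ (2*β)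
      ≤ CR * ((D+1) * ∫⁻ lam : Fin N → ℝ, Wfun V β lam) := by
    calc ∫⁻ lam : Fin N → ℝ, Wfun V β lam * ∏ i, (ENNReal.ofReal |x - lam i|) ^ (2*β)
        ≤ ∫⁻ lam : Fin N → ℝ, CR * ((∏ i, gE (lam i) ^ β) * Wfun V β lam) := by
          refine lintegral_mono fun lam => ?_
          calc Wfun V β lam * ∏ i, (ENNReal.ofReal |x - lam i|) ^ (2*β)
              ≤ Wfun V β lam * (CR * ∏ i, gE (lam i) ^ β) :=
                mul_le_mul_right (hstepA lam) _
            _ = CR * ((∏ i, gE (lam i) ^ β) * Wfun V β lam) := by ring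
      _ = CR * ∫⁻ lam : Fin N → ℝ, (∏ i, gE (lam i) ^ β) * Wfun V β lam :=
          lintegral_const_mul' CR _ hCRtop
      _ ≤ CR * ((D+1) * ∫⁻ lam : Fin N → ℝ, Wfun V β lam) := mul_le_mul_right hfull _
  rw [hmain]
  have hfinal : (∫⁻ lam : Fin N → ℝ, Wfun V β lam)⁻¹
      * (∫⁻ lam : Fin N → ℝ, Wfun V β lam * ∏ i, (ENNReal.ofReal |x - lam i|) ^ (2*β))
      ≤ CR * (D + 1) := by
    calc (∫⁻ lam : Fin N → ℝ, Wfun V β lam)⁻¹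
        * (∫⁻ lam : Fin N → ℝ, Wfun V β lam * ∏ i, (ENNReal.ofReal |x - lam i|) ^ (2*β))
        ≤ (∫⁻ lam : Fin N → ℝ, Wfun V β lam)⁻¹
            * (CR * ((D+1) * ∫⁻ lam : Fin N → ℝ, Wfun V β lam)) := mul_le_mul_right hT _
      _ = (CR * (D+1)) * ((∫⁻ lam : Fin N → ℝ, Wfun V β lam)⁻¹
            * ∫⁻ lam : Fin N → ℝ, Wfun V β lam) := by ring
      _ = CR * (D+1) := by rw [ENNReal.inv_mul_cancel hZ0 hZtop, mul_one]
  exact ENNReal.toReal_mono (ENNReal.mul_ne_top hCRtop hD1top) hfinal
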